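/- arXiv:2103.09628 — 2 statements merged into one kernel-verified Lean document; each statement's English description precedes it below -/
import Mathlib

section
/- For any positive definite Hermitian matrices X and Y of size N, the quantity D_KL(X,Y) = Tr(X Y^{-1}) - log det(X Y^{-1}) - N is nonnegative, and equals zero if and only if X = Y. -/
open Matrix ComplexOrder

section KLaux

variable {n : Type*} [Fintype n] [DecidableEq n]

private lemma kl_trace_eq_sum_eigenvalues {A : Matrix n n ℂ} (hA : A.IsHermitian) :
    A.trace = ∑ i, (hA.eigenvalues i : ℂ) := by
  conv_lhs => rw [hA.spectral_theorem]
  rw [Unitary.conjStarAlgAut_apply, trace_mul_comm, ← mul_assoc, Unitary.coe_star_mul_self, one_mul, trace_diagonal]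
  simp [Function.comp]

private lemma kl_eq_one_of_eigenvalues {A : Matrix n n ℂ} (hA : A.IsHermitian)
    (h : ∀ i, hA.eigenvalues i = 1) : A = 1 := by
  have h2 : (RCLike.ofReal ∘ hA.eigenvalues : n → ℂ) = fun _ => 1 := by
    funext i; simp [h i]
  rw [hA.spectral_theorem, h2]
  simp [Matrix.diagonal_one, Unitary.coe_mul_star_self]

private lemma kl_posDef_conj {A B : Matrix n n ℂ} (hA : A.PosDef) (hB : B.IsHermitian)
    (hBu : IsUnit B) : (B * A * B).PosDef := by
  refine .of_dotProduct_mulVec_pos ?_ fun x hx => ?_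
  · have := isHermitian_conjTranspose_mul_mul B hA.1
    rwa [hB.eq] at this
  · have hBx : B *ᵥ x ≠ 0 := by
      intro h
      exact hx <| (Matrix.mulVec_injective_iff_isUnit.mpr hBu).eq_iff' (by simp) |>.mp h
    have key : star x ⬝ᵥ (B * A * B) *ᵥ x = star (B *ᵥ x) ⬝ᵥ A *ᵥ (B *ᵥ x) := by
      rw [star_mulVec, ← mulVec_mulVec, ← mulVec_mulVec, dotProduct_mulVec (star x), hB.eq]
    rw [key]
    exact hA.dotProduct_mulVec_pos hBx

open scoped MatrixOrder in
private noncomputable def klSqrt (Y : Matrix n n ℂ) : Matrix n n ℂ := CFC.sqrt Y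

open scoped MatrixOrder in
private lemma klSqrt_isHermitian {Y : Matrix n n ℂ} (hY : Y.PosSemidef) :
    (klSqrt Y).IsHermitian :=
  (nonneg_iff_posSemidef.mp (CFC.sqrt_nonneg Y)).1

open scoped MatrixOrder in
private lemma klSqrt_mul_self {Y : Matrix n n ℂ} (hY : Y.PosSemidef) :
    klSqrt Y * klSqrt Y = Y :=
  CFC.sqrt_mul_sqrt_self Y (nonneg_iff_posSemidef.mpr hY)

end KLaux

/-- Gaussian KL divergence `D_KL(X,Y) = Tr(X Y⁻¹) - log det(X Y⁻¹) - N` is nonnegative for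
positive definite Hermitian `X, Y`, and vanishes iff `X = Y`. -/
theorem kl_divergence_nonneg_and_eq_zero_iff {N : ℕ}
    (X Y : Matrix (Fin N) (Fin N) ℂ) (hX : X.PosDef) (hY : Y.PosDef) :
    0 ≤ (X * Y⁻¹).trace.re - Real.log ((X * Y⁻¹).det.re) - N ∧
      ((X * Y⁻¹).trace.re - Real.log ((X * Y⁻¹).det.re) - N = 0 ↔ X = Y) := by
  classical
  set S := klSqrt Y with hSdef
  have hSH : S.IsHermitian := klSqrt_isHermitian hY.posSemidef
  have hSS : S * S = Y := klSqrt_mul_self hY.posSemidef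
  have hYdet : Y.det ≠ 0 := hY.det_pos.ne'
  have hSdet : S.det ≠ 0 := by
    intro h
    apply hYdet
    rw [← hSS, det_mul, h, mul_zero]
  have hSu : IsUnit S := (isUnit_iff_isUnit_det _).2 (isUnit_iff_ne_zero.2 hSdet)
  have hSinvu : IsUnit S⁻¹ := Matrix.isUnit_nonsing_inv_iff.2 hSu
  have hSinvS : S⁻¹ * S = 1 := nonsing_inv_mul S (isUnit_iff_ne_zero.2 hSdet)
  have hSSinv : S * S⁻¹ = 1 := mul_nonsing_inv S (isUnit_iff_ne_zero.2 hSdet)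
  set M := S⁻¹ * X * S⁻¹ with hMdef
  have hMpd : M.PosDef := kl_posDef_conj hX hSH.inv hSinvu
  have hYinv : Y⁻¹ = S⁻¹ * S⁻¹ := by rw [← hSS, Matrix.mul_inv_rev]
  -- trace identity
  have htr : (X * Y⁻¹).trace = M.trace := by
    rw [hYinv, hMdef, mul_assoc, ← mul_assoc X, trace_mul_comm]
  -- det identity
  have hdet : (X * Y⁻¹).det = M.det := by
    rw [hYinv, hMdef]
    simp only [det_mul]
    ring
  set ev : Fin N → ℝ := hMpd.1.eigenvalues with hevdef
  have hevpos : ∀ i, 0 < ev i := hMpd.eigenvalues_pos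
  have htr_re : (X * Y⁻¹).trace.re = ∑ i, ev i := by
    rw [htr, kl_trace_eq_sum_eigenvalues hMpd.1]
    simp
    rfl
  have hdet_re : (X * Y⁻¹).det.re = ∏ i, ev i := by
    rw [hdet, hMpd.1.det_eq_prod_eigenvalues, ← RCLike.ofReal_prod]
    exact Complex.ofReal_re _
  have hlog : Real.log ((X * Y⁻¹).det.re) = ∑ i, Real.log (ev i) := by
    rw [hdet_re, Real.log_prod]
    intro i _
    exact (hevpos i).ne'
  have hN : (N : ℝ) = ∑ _i : Fin N, (1 : ℝ) := by simp
  have hexpr : (X * Y⁻¹).trace.re - Real.log ((X * Y⁻¹).det.re) - N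
      = ∑ i, (ev i - Real.log (ev i) - 1) := by
    rw [htr_re, hlog, hN, ← Finset.sum_sub_distrib, ← Finset.sum_sub_distrib]
  have hterm_nonneg : ∀ i ∈ Finset.univ, 0 ≤ ev i - Real.log (ev i) - 1 := by
    intro i _
    have := Real.log_le_sub_one_of_pos (hevpos i)
    linarith
  constructor
  · rw [hexpr]
    exact Finset.sum_nonneg hterm_nonneg
  · constructor
    · intro h0
      rw [hexpr] at h0
      have hall := (Finset.sum_eq_zero_iff_of_nonneg hterm_nonneg).mp h0
      have hev1 : ∀ i, ev i = 1 := by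
        intro i
        by_contra hne
        have := Real.log_lt_sub_one_of_pos (hevpos i) hne
        have := hall i (Finset.mem_univ i)
        linarith
      have hM1 : M = 1 := kl_eq_one_of_eigenvalues hMpd.1 hev1
      have : S * M * S = X := by
        rw [hMdef, mul_assoc, mul_assoc, hSinvS, mul_one, ← mul_assoc, hSSinv, one_mul]
      rw [hM1, mul_one, hSS] at this
      exact this.symm
    · intro hXY
      subst hXY
      rw [mul_nonsing_inv X (isUnit_iff_ne_zero.2 hYdet)]
      simp
end

section
/- Let z be uniformly distributed on the unit sphere of C^N and Λ a fixed N×N Hermitian matrix. Then E[(z^H Λ z)²] = (Tr(Λ²) + Tr(Λ)²) / (N(N+1)). -/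
open Matrix MeasureTheory
open scoped ComplexConjugate

namespace SphereMomentsAux

variable {N : ℕ}

noncomputable def cc : ℂ := (Real.sqrt 2 : ℂ)⁻¹

lemma conj_cc : conj cc = cc := by
  simp [cc, ← Complex.ofReal_inv]

lemma cc_mul_cc : cc * cc = (2 : ℂ)⁻¹ := by
  rw [cc, ← mul_inv, ← Complex.ofReal_mul, Real.mul_self_sqrt (by norm_num)]
  norm_num

lemma sum_pair_of_eq_zero {M : Type*} [AddCommMonoid M] {i j : Fin N} (h : i ≠ j)
    (f : Fin N → M) (hf : ∀ k, k ≠ i → k ≠ j → f k = 0) :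
    ∑ k, f k = f i + f j := by
  rw [← Finset.sum_pair h]
  exact (Finset.sum_subset (Finset.subset_univ _) (fun k _ hk => by
    simp only [Finset.mem_insert, Finset.mem_singleton, not_or] at hk
    exact hf k hk.1 hk.2)).symm

def phaseM (j : Fin N) : Matrix (Fin N) (Fin N) ℂ :=
  Matrix.diagonal (fun l => if l = j then Complex.I else 1)

lemma phaseM_mem (j : Fin N) : phaseM j ∈ Matrix.unitaryGroup (Fin N) ℂ := by
  rw [Matrix.mem_unitaryGroup_iff]
  rw [phaseM, Matrix.star_eq_conjTranspose, Matrix.diagonal_conjTranspose,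
    Matrix.diagonal_mul_diagonal]
  ext i k
  by_cases h : i = k
  · subst h
    by_cases h2 : i = j <;>
      simp [Matrix.diagonal_apply_eq, h2, Complex.conj_I, Matrix.one_apply]
  · simp [Matrix.diagonal_apply_ne _ h, Matrix.one_apply, h]

lemma phaseM_mulVec (j : Fin N) (z : Fin N → ℂ) (l : Fin N) :
    (phaseM j *ᵥ z) l = (if l = j then Complex.I else 1) * z l := by
  simp [phaseM, Matrix.mulVec_diagonal]

noncomputable def rotM (i j : Fin N) : Matrix (Fin N) (Fin N) ℂ :=
  Matrix.of fun k l =>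
    if k = i then (if l = i then cc else if l = j then cc else 0)
    else if k = j then (if l = i then cc else if l = j then -cc else 0)
    else if l = k then 1 else 0

lemma rotM_mem {i j : Fin N} (h : i ≠ j) : rotM i j ∈ Matrix.unitaryGroup (Fin N) ℂ := by
  have hcc : cc * conj cc = 2⁻¹ := by rw [conj_cc, cc_mul_cc]
  rw [Matrix.mem_unitaryGroup_iff]
  ext k k'
  rw [Matrix.mul_apply]
  simp only [Matrix.star_eq_conjTranspose, Matrix.conjTranspose_apply, rotM, Matrix.of_apply,
    Matrix.one_apply]
  by_cases hki : k = i
  · subst hki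
    by_cases hki' : k' = k
    · subst hki'
      rw [sum_pair_of_eq_zero h _ (fun l h1 h2 => by simp [h1, h2])]
      simp [h, h.symm, hcc]
      try norm_num
    · by_cases hkj' : k' = j
      · subst hkj'
        rw [sum_pair_of_eq_zero h _ (fun l h1 h2 => by simp [h1, h2])]
        simp [h, h.symm, Ne.symm hki', hcc]
        try ring
      · rw [sum_pair_of_eq_zero h _ (fun l h1 h2 => by simp [h1, h2])]
        simp [h, h.symm, hki', hkj', Ne.symm hki', Ne.symm hkj']
  · by_cases hkj : k = j
    · subst hkj
      by_cases hki' : k' = i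
      · subst hki'
        rw [sum_pair_of_eq_zero h _ (fun l h1 h2 => by simp [h1, h2])]
        simp [h, h.symm, hcc]
        try ring
      · by_cases hkj' : k' = k
        · subst hkj'
          rw [sum_pair_of_eq_zero h _ (fun l h1 h2 => by simp [h1, h2])]
          simp [h, h.symm, hcc]
          try norm_num
        · rw [sum_pair_of_eq_zero h _ (fun l h1 h2 => by simp [h1, h2])]
          simp [h, h.symm, hki', hkj', Ne.symm hki', Ne.symm hkj']
    · by_cases hki' : k' = i
      · subst hki'
        rw [Finset.sum_eq_zero fun l _ => ?_]
        · simp [fun hh : k = k' => hki hh, hki, hkj]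
        · by_cases hl : l = k
          · subst hl; simp [hki, hkj]
          · simp [hl, hki, hkj]
      · by_cases hkj' : k' = j
        · subst hkj'
          rw [Finset.sum_eq_zero fun l _ => ?_]
          · simp [fun hh : k = k' => hkj hh, hki, hkj]
          · by_cases hl : l = k
            · subst hl; simp [hki, hkj]
            · simp [hl, hki, hkj]
        · simp only [hki, hkj, hki', hkj', if_false]
          rw [Finset.sum_eq_single k (fun l _ hl => by simp [hl]) (by simp)]
          by_cases hkk : k = k'
          · simp [hkk]
          · simp [hkk, Ne.symm hkk]

lemma rotM_mulVec {i j : Fin N} (h : i ≠ j) (z : Fin N → ℂ) (k : Fin N) :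
    (rotM i j *ᵥ z) k =
      if k = i then cc * (z i + z j) else if k = j then cc * (z i - z j) else z k := by
  rw [Matrix.mulVec, dotProduct]
  by_cases hki : k = i
  · subst hki
    rw [sum_pair_of_eq_zero h _ (fun l h1 h2 => by simp [rotM, h1, h2])]
    simp [rotM, h, h.symm]
    ring
  · by_cases hkj : k = j
    · subst hkj
      rw [sum_pair_of_eq_zero h _ (fun l h1 h2 => by simp [rotM, h1, h2])]
      simp [rotM, h, h.symm, hki]
      ring
    · rw [Finset.sum_eq_single k (fun l _ hl => by simp [rotM, hki, hkj, hl]) (by simp)]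
      simp [rotM, hki, hkj]

section Measure

variable (μ : Measure (Fin N → ℂ)) [IsProbabilityMeasure μ]

lemma continuous_mulVecFun (U : Matrix (Fin N) (Fin N) ℂ) :
    Continuous (fun z : Fin N → ℂ => U *ᵥ z) :=
  continuous_pi fun i => by
    simp only [Matrix.mulVec, dotProduct]
    exact continuous_finset_sum _ fun j _ => continuous_const.mul (continuous_apply j)

lemma cov {E : Type*} [NormedAddCommGroup E] [NormedSpace ℝ E]
    (hunitary : ∀ U : Matrix.unitaryGroup (Fin N) ℂ,
      Measure.map (fun z => (U : Matrix (Fin N) (Fin N) ℂ) *ᵥ z) μ = μ)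
    {U : Matrix (Fin N) (Fin N) ℂ} (hU : U ∈ Matrix.unitaryGroup (Fin N) ℂ)
    (f : (Fin N → ℂ) → E) (hf : Continuous f) :
    ∫ z, f (U *ᵥ z) ∂μ = ∫ z, f z ∂μ := by
  conv_rhs => rw [← hunitary ⟨U, hU⟩]
  rw [integral_map (continuous_mulVecFun U).aemeasurable hf.aestronglyMeasurable]

def Q (a b : Fin N) (z : Fin N → ℂ) : ℂ := z a * conj (z b)

def P (a b c d : Fin N) (z : Fin N → ℂ) : ℂ := Q a b z * Q c d z

lemma contQ (a b : Fin N) : Continuous (Q a b) := by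
  have : Q a b = fun z : Fin N → ℂ => z a * star (z b) := rfl
  rw [this]
  exact (continuous_apply a).mul (continuous_apply b).star

lemma contP (a b c d : Fin N) : Continuous (P a b c d) := (contQ a b).mul (contQ c d)

lemma norm_coord_le {z : Fin N → ℂ} (hz : ∑ i, ‖z i‖ ^ 2 = 1) (a : Fin N) : ‖z a‖ ≤ 1 := by
  have h1 : ‖z a‖ ^ 2 ≤ 1 := by
    rw [← hz]
    exact Finset.single_le_sum (f := fun i => ‖z i‖ ^ 2) (fun i _ => sq_nonneg _)
      (Finset.mem_univ a)
  nlinarith [norm_nonneg (z a)]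

lemma intQ (hsphere : ∀ᵐ z ∂μ, ∑ i, ‖z i‖ ^ 2 = 1) (a b : Fin N) : Integrable (Q a b) μ := by
  refine Integrable.mono' (integrable_const 1) (contQ a b).aestronglyMeasurable
    (hsphere.mono fun z hz => ?_)
  have ha := norm_coord_le hz a
  have hb := norm_coord_le hz b
  have hb' : ‖conj (z b)‖ ≤ 1 := by rwa [RCLike.norm_conj]
  calc ‖Q a b z‖ = ‖z a‖ * ‖conj (z b)‖ := norm_mul _ _
    _ ≤ 1 := by nlinarith [norm_nonneg (z a), norm_nonneg (conj (z b))]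

lemma intP (hsphere : ∀ᵐ z ∂μ, ∑ i, ‖z i‖ ^ 2 = 1) (a b c d : Fin N) :
    Integrable (P a b c d) μ := by
  refine Integrable.mono' (integrable_const 1) (contP a b c d).aestronglyMeasurable
    (hsphere.mono fun z hz => ?_)
  have ha := norm_coord_le hz a
  have hb := norm_coord_le hz b
  have hc := norm_coord_le hz c
  have hd := norm_coord_le hz d
  have hb' : ‖conj (z b)‖ ≤ 1 := by rwa [RCLike.norm_conj]
  have hd' : ‖conj (z d)‖ ≤ 1 := by rwa [RCLike.norm_conj]
  calc ‖P a b c d z‖ = ‖z a‖ * ‖conj (z b)‖ * (‖z c‖ * ‖conj (z d)‖) := by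
        simp [P, Q, norm_mul]
    _ ≤ 1 := by
        have h1 : ‖z a‖ * ‖conj (z b)‖ ≤ 1 := by
          nlinarith [norm_nonneg (z a), norm_nonneg (conj (z b))]
        have h2 : ‖z c‖ * ‖conj (z d)‖ ≤ 1 := by
          nlinarith [norm_nonneg (z c), norm_nonneg (conj (z d))]
        nlinarith [mul_nonneg (norm_nonneg (z a)) (norm_nonneg (conj (z b))),
          mul_nonneg (norm_nonneg (z c)) (norm_nonneg (conj (z d)))]

variable (hunitary : ∀ U : Matrix.unitaryGroup (Fin N) ℂ,
      Measure.map (fun z => (U : Matrix (Fin N) (Fin N) ℂ) *ᵥ z) μ = μ)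

include hunitary in
lemma vanish (f : (Fin N → ℂ) → ℂ) (hf : Continuous f) (j : Fin N) (ω : ℂ) (hω : ω ≠ 1)
    (hps : ∀ z, f (phaseM j *ᵥ z) = ω * f z) : ∫ z, f z ∂μ = 0 := by
  have h1 : ∫ z, f (phaseM j *ᵥ z) ∂μ = ∫ z, f z ∂μ := cov μ hunitary (phaseM_mem j) f hf
  simp_rw [hps] at h1
  rw [integral_const_mul] at h1
  rcases mul_eq_zero.mp (show (ω - 1) * ∫ z, f z ∂μ = 0 by linear_combination h1) with hc | hc
  · exact absurd (sub_eq_zero.mp hc) hω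
  · exact hc

include hunitary in
lemma zeroQ {a b : Fin N} (h : a ≠ b) : ∫ z, Q a b z ∂μ = 0 := by
  refine vanish μ hunitary _ (contQ a b) a Complex.I
    (fun hI => by simpa using congrArg Complex.im hI) (fun z => ?_)
  simp [Q, phaseM_mulVec, Ne.symm h, _root_.map_mul]
  ring

lemma I_ne_one : Complex.I ≠ 1 := fun hI => by simpa using congrArg Complex.im hI

lemma negI_ne_one : -Complex.I ≠ 1 := fun hI => by simpa using congrArg Complex.re hI

lemma neg1_ne_one : (-1 : ℂ) ≠ 1 := by norm_num

include hunitary in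
lemma zeroP1 {i j : Fin N} (h : i ≠ j) : ∫ z, P i j i j z ∂μ = 0 := by
  refine vanish μ hunitary _ (contP i j i j) i (-1) neg1_ne_one (fun z => ?_)
  simp [P, Q, phaseM_mulVec, Ne.symm h, _root_.map_mul, Complex.conj_I]
  linear_combination (z i * (starRingEnd ℂ) (z j)) ^ 2 * Complex.I_sq

include hunitary in
lemma zeroP2 {i j : Fin N} (h : i ≠ j) : ∫ z, P j i j i z ∂μ = 0 := by
  refine vanish μ hunitary _ (contP j i j i) i (-1) neg1_ne_one (fun z => ?_)
  simp [P, Q, phaseM_mulVec, Ne.symm h, _root_.map_mul, Complex.conj_I]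
  linear_combination (z j * (starRingEnd ℂ) (z i)) ^ 2 * Complex.I_sq

include hunitary in
lemma zeroP3 {i j : Fin N} (h : i ≠ j) : ∫ z, P i i i j z ∂μ = 0 := by
  refine vanish μ hunitary _ (contP i i i j) j (-Complex.I) negI_ne_one (fun z => ?_)
  simp [P, Q, phaseM_mulVec, h, _root_.map_mul, Complex.conj_I]
  ring

include hunitary in
lemma zeroP4 {i j : Fin N} (h : i ≠ j) : ∫ z, P i i j i z ∂μ = 0 := by
  refine vanish μ hunitary _ (contP i i j i) j Complex.I I_ne_one (fun z => ?_)
  simp [P, Q, phaseM_mulVec, h, _root_.map_mul, Complex.conj_I]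
  ring

include hunitary in
lemma zeroP5 {i j : Fin N} (h : i ≠ j) : ∫ z, P i j j j z ∂μ = 0 := by
  refine vanish μ hunitary _ (contP i j j j) i Complex.I I_ne_one (fun z => ?_)
  simp [P, Q, phaseM_mulVec, Ne.symm h, _root_.map_mul, Complex.conj_I]
  ring

include hunitary in
lemma zeroP6 {i j : Fin N} (h : i ≠ j) : ∫ z, P j i j j z ∂μ = 0 := by
  refine vanish μ hunitary _ (contP j i j j) i (-Complex.I) negI_ne_one (fun z => ?_)
  simp [P, Q, phaseM_mulVec, Ne.symm h, _root_.map_mul, Complex.conj_I]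
  ring

variable (hsphere : ∀ᵐ z ∂μ, ∑ i, ‖z i‖ ^ 2 = 1)

include hunitary hsphere in
lemma relC {i j : Fin N} (h : i ≠ j) : ∫ z, Q i i z ∂μ = ∫ z, Q j j z ∂μ := by
  have hpt : ∀ z : Fin N → ℂ, Q i i (rotM i j *ᵥ z) =
      2⁻¹ * (Q i i z + Q j j z + Q i j z + Q j i z) := by
    intro z
    simp [Q, rotM_mulVec h, h, Ne.symm h, _root_.map_mul, map_add, conj_cc]
    linear_combination ((z i + z j) * ((starRingEnd ℂ) (z i) + (starRingEnd ℂ) (z j))) * cc_mul_cc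
  have key : ∫ z, Q i i z ∂μ =
      2⁻¹ * ((∫ z, Q i i z ∂μ) + (∫ z, Q j j z ∂μ) + (∫ z, Q i j z ∂μ) + (∫ z, Q j i z ∂μ)) := by
    calc ∫ z, Q i i z ∂μ = ∫ z, Q i i (rotM i j *ᵥ z) ∂μ :=
          (cov μ hunitary (rotM_mem h) _ (contQ i i)).symm
      _ = ∫ z, 2⁻¹ * (Q i i z + Q j j z + Q i j z + Q j i z) ∂μ :=
          integral_congr_ae (Filter.Eventually.of_forall hpt)
      _ = 2⁻¹ * ∫ z, (Q i i z + Q j j z + Q i j z + Q j i z) ∂μ := integral_const_mul _ _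
      _ = 2⁻¹ * ((∫ z, Q i i z ∂μ) + (∫ z, Q j j z ∂μ) + (∫ z, Q i j z ∂μ) + (∫ z, Q j i z ∂μ)) := by
          have s1 : ∫ z, (Q i i z + Q j j z + Q i j z + Q j i z) ∂μ =
              (∫ z, (Q i i z + Q j j z + Q i j z) ∂μ) + ∫ z, Q j i z ∂μ :=
            integral_add (((intQ μ hsphere i i).add (intQ μ hsphere j j)).add
              (intQ μ hsphere i j)) (intQ μ hsphere j i)
          have s2 : ∫ z, (Q i i z + Q j j z + Q i j z) ∂μ =
              (∫ z, (Q i i z + Q j j z) ∂μ) + ∫ z, Q i j z ∂μ :=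
            integral_add ((intQ μ hsphere i i).add (intQ μ hsphere j j)) (intQ μ hsphere i j)
          have s3 : ∫ z, (Q i i z + Q j j z) ∂μ = (∫ z, Q i i z ∂μ) + ∫ z, Q j j z ∂μ :=
            integral_add (intQ μ hsphere i i) (intQ μ hsphere j j)
          rw [s1, s2, s3]
  rw [zeroQ μ hunitary h, zeroQ μ hunitary (Ne.symm h)] at key
  linear_combination 2 * key

include hunitary hsphere in
lemma relE {i j : Fin N} (h : i ≠ j) :
    ∫ z, P i i j j z ∂μ =
      4⁻¹ * ((∫ z, P i i i i z ∂μ) + (∫ z, P j j j j z ∂μ)) := by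
  have hpt : ∀ z : Fin N → ℂ, P i i j j (rotM i j *ᵥ z) =
      4⁻¹ * (P i i i i z + P j j j j z - P i j i j z - P j i j i z) := by
    intro z
    simp [P, Q, rotM_mulVec h, h, Ne.symm h, _root_.map_mul, map_add, map_sub, conj_cc]
    linear_combination ((z i + z j) * ((starRingEnd ℂ) (z i) + (starRingEnd ℂ) (z j)) *
      ((z i - z j) * ((starRingEnd ℂ) (z i) - (starRingEnd ℂ) (z j))) *
      (cc * cc + 2⁻¹)) * cc_mul_cc
  calc ∫ z, P i i j j z ∂μ = ∫ z, P i i j j (rotM i j *ᵥ z) ∂μ :=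
        (cov μ hunitary (rotM_mem h) _ (contP i i j j)).symm
    _ = ∫ z, 4⁻¹ * (P i i i i z + P j j j j z - P i j i j z - P j i j i z) ∂μ :=
        integral_congr_ae (Filter.Eventually.of_forall hpt)
    _ = 4⁻¹ * ∫ z, (P i i i i z + P j j j j z - P i j i j z - P j i j i z) ∂μ :=
        integral_const_mul _ _
    _ = 4⁻¹ * ((∫ z, P i i i i z ∂μ) + (∫ z, P j j j j z ∂μ) - (∫ z, P i j i j z ∂μ)
          - (∫ z, P j i j i z ∂μ)) := by
        have s1 : ∫ z, (P i i i i z + P j j j j z - P i j i j z - P j i j i z) ∂μ =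
            (∫ z, (P i i i i z + P j j j j z - P i j i j z) ∂μ) - ∫ z, P j i j i z ∂μ :=
          integral_sub (((intP μ hsphere i i i i).add (intP μ hsphere j j j j)).sub
            (intP μ hsphere i j i j)) (intP μ hsphere j i j i)
        have s2 : ∫ z, (P i i i i z + P j j j j z - P i j i j z) ∂μ =
            (∫ z, (P i i i i z + P j j j j z) ∂μ) - ∫ z, P i j i j z ∂μ :=
          integral_sub ((intP μ hsphere i i i i).add (intP μ hsphere j j j j))
            (intP μ hsphere i j i j)
        have s3 : ∫ z, (P i i i i z + P j j j j z) ∂μ =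
            (∫ z, P i i i i z ∂μ) + ∫ z, P j j j j z ∂μ :=
          integral_add (intP μ hsphere i i i i) (intP μ hsphere j j j j)
        rw [s1, s2, s3]
    _ = 4⁻¹ * ((∫ z, P i i i i z ∂μ) + (∫ z, P j j j j z ∂μ)) := by
        rw [zeroP1 μ hunitary h, zeroP2 μ hunitary h]; ring

include hunitary hsphere in
lemma relD {i j : Fin N} (h : i ≠ j) :
    ∫ z, P i i i i z ∂μ =
      4⁻¹ * ((∫ z, P i i i i z ∂μ) + (∫ z, P j j j j z ∂μ)) + ∫ z, P i i j j z ∂μ := by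
  have hpt : ∀ z : Fin N → ℂ, P i i i i (rotM i j *ᵥ z) =
      4⁻¹ * (P i i i i z + P j j j j z + P i j i j z + P j i j i z + 4 * P i i j j z
        + 2 * P i i i j z + 2 * P i i j i z + 2 * P i j j j z + 2 * P j i j j z) := by
    intro z
    simp [P, Q, rotM_mulVec h, h, Ne.symm h, _root_.map_mul, map_add, conj_cc]
    linear_combination (((z i + z j) * ((starRingEnd ℂ) (z i) + (starRingEnd ℂ) (z j))) ^ 2 *
      (cc * cc + 2⁻¹)) * cc_mul_cc
  have hint : ∀ (a b c d : Fin N), Integrable (P a b c d) μ := intP μ hsphere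
  calc ∫ z, P i i i i z ∂μ = ∫ z, P i i i i (rotM i j *ᵥ z) ∂μ :=
        (cov μ hunitary (rotM_mem h) _ (contP i i i i)).symm
    _ = ∫ z, 4⁻¹ * (P i i i i z + P j j j j z + P i j i j z + P j i j i z + 4 * P i i j j z
          + 2 * P i i i j z + 2 * P i i j i z + 2 * P i j j j z + 2 * P j i j j z) ∂μ :=
        integral_congr_ae (Filter.Eventually.of_forall hpt)
    _ = 4⁻¹ * ∫ z, (P i i i i z + P j j j j z + P i j i j z + P j i j i z + 4 * P i i j j z
          + 2 * P i i i j z + 2 * P i i j i z + 2 * P i j j j z + 2 * P j i j j z) ∂μ :=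
        integral_const_mul _ _
    _ = 4⁻¹ * ((∫ z, P i i i i z ∂μ) + (∫ z, P j j j j z ∂μ) + (∫ z, P i j i j z ∂μ)
          + (∫ z, P j i j i z ∂μ) + 4 * (∫ z, P i i j j z ∂μ) + 2 * (∫ z, P i i i j z ∂μ)
          + 2 * (∫ z, P i i j i z ∂μ) + 2 * (∫ z, P i j j j z ∂μ)
          + 2 * (∫ z, P j i j j z ∂μ)) := by
        have i1 := hint i i i i
        have i2 := hint j j j j
        have i3 := hint i j i j
        have i4 := hint j i j i
        have i5 := (hint i i j j).const_mul (4 : ℂ)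
        have i6 := (hint i i i j).const_mul (2 : ℂ)
        have i7 := (hint i i j i).const_mul (2 : ℂ)
        have i8 := (hint i j j j).const_mul (2 : ℂ)
        have s1 : ∫ z, (P i i i i z + P j j j j z + P i j i j z + P j i j i z + 4 * P i i j j z
              + 2 * P i i i j z + 2 * P i i j i z + 2 * P i j j j z + 2 * P j i j j z) ∂μ =
            (∫ z, (P i i i i z + P j j j j z + P i j i j z + P j i j i z + 4 * P i i j j z
              + 2 * P i i i j z + 2 * P i i j i z + 2 * P i j j j z) ∂μ)
              + ∫ z, 2 * P j i j j z ∂μ :=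
          integral_add (((((((i1.add i2).add i3).add i4).add i5).add i6).add i7).add i8)
            ((hint j i j j).const_mul 2)
        have s2 : ∫ z, (P i i i i z + P j j j j z + P i j i j z + P j i j i z + 4 * P i i j j z
              + 2 * P i i i j z + 2 * P i i j i z + 2 * P i j j j z) ∂μ =
            (∫ z, (P i i i i z + P j j j j z + P i j i j z + P j i j i z + 4 * P i i j j z
              + 2 * P i i i j z + 2 * P i i j i z) ∂μ) + ∫ z, 2 * P i j j j z ∂μ :=
          integral_add ((((((i1.add i2).add i3).add i4).add i5).add i6).add i7) i8
        have s3 : ∫ z, (P i i i i z + P j j j j z + P i j i j z + P j i j i z + 4 * P i i j j z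
              + 2 * P i i i j z + 2 * P i i j i z) ∂μ =
            (∫ z, (P i i i i z + P j j j j z + P i j i j z + P j i j i z + 4 * P i i j j z
              + 2 * P i i i j z) ∂μ) + ∫ z, 2 * P i i j i z ∂μ :=
          integral_add (((((i1.add i2).add i3).add i4).add i5).add i6) i7
        have s4 : ∫ z, (P i i i i z + P j j j j z + P i j i j z + P j i j i z + 4 * P i i j j z
              + 2 * P i i i j z) ∂μ =
            (∫ z, (P i i i i z + P j j j j z + P i j i j z + P j i j i z + 4 * P i i j j z) ∂μ)
              + ∫ z, 2 * P i i i j z ∂μ :=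
          integral_add ((((i1.add i2).add i3).add i4).add i5) i6
        have s5 : ∫ z, (P i i i i z + P j j j j z + P i j i j z + P j i j i z
              + 4 * P i i j j z) ∂μ =
            (∫ z, (P i i i i z + P j j j j z + P i j i j z + P j i j i z) ∂μ)
              + ∫ z, 4 * P i i j j z ∂μ :=
          integral_add (((i1.add i2).add i3).add i4) i5
        have s6 : ∫ z, (P i i i i z + P j j j j z + P i j i j z + P j i j i z) ∂μ =
            (∫ z, (P i i i i z + P j j j j z + P i j i j z) ∂μ) + ∫ z, P j i j i z ∂μ :=
          integral_add ((i1.add i2).add i3) i4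
        have s7 : ∫ z, (P i i i i z + P j j j j z + P i j i j z) ∂μ =
            (∫ z, (P i i i i z + P j j j j z) ∂μ) + ∫ z, P i j i j z ∂μ :=
          integral_add (i1.add i2) i3
        have s8 : ∫ z, (P i i i i z + P j j j j z) ∂μ =
            (∫ z, P i i i i z ∂μ) + ∫ z, P j j j j z ∂μ :=
          integral_add i1 i2
        rw [s1, s2, s3, s4, s5, s6, s7, s8, integral_const_mul, integral_const_mul,
          integral_const_mul, integral_const_mul, integral_const_mul]
    _ = 4⁻¹ * ((∫ z, P i i i i z ∂μ) + (∫ z, P j j j j z ∂μ)) + ∫ z, P i i j j z ∂μ := by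
        rw [zeroP1 μ hunitary h, zeroP2 μ hunitary h, zeroP3 μ hunitary h, zeroP4 μ hunitary h,
          zeroP5 μ hunitary h, zeroP6 μ hunitary h]
        ring

lemma sum_Q_eq_one {z : Fin N → ℂ} (hz : ∑ i, ‖z i‖ ^ 2 = 1) : ∑ j, Q j j z = 1 := by
  have h1 : ∀ j, Q j j z = ((‖z j‖ ^ 2 : ℝ) : ℂ) := fun j => by
    rw [Q, Complex.mul_conj, Complex.normSq_eq_norm_sq]
  rw [Finset.sum_congr rfl fun j _ => h1 j, ← Complex.ofReal_sum, hz, Complex.ofReal_one]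

include hsphere in
lemma rowSum (i : Fin N) : ∫ z, Q i i z ∂μ = ∑ j, ∫ z, P i i j j z ∂μ := by
  have hae : ∀ᵐ z ∂μ, Q i i z = ∑ j, P i i j j z := hsphere.mono fun z hz => by
    rw [show ∑ j, P i i j j z = Q i i z * ∑ j, Q j j z by rw [Finset.mul_sum]; rfl,
      sum_Q_eq_one hz, mul_one]
  rw [integral_congr_ae hae, integral_finset_sum _ (fun j _ => intP μ hsphere i i j j)]

include hsphere in
lemma totalSum : ∑ i, ∫ z, Q i i z ∂μ = 1 := by
  rw [← integral_finset_sum _ (fun i _ => intQ μ hsphere i i)]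
  have hae : ∀ᵐ z ∂μ, ∑ i, Q i i z = (1 : ℂ) := hsphere.mono fun z hz => sum_Q_eq_one hz
  rw [integral_congr_ae hae]
  simp

include hunitary hsphere in
lemma m_val (hN : 0 < N) (i : Fin N) : ∫ z, Q i i z ∂μ = ((N : ℂ))⁻¹ := by
  have hall : ∀ k, ∫ z, Q k k z ∂μ = ∫ z, Q i i z ∂μ := fun k => by
    by_cases hk : k = i
    · rw [hk]
    · exact relC μ hunitary hsphere hk
  have htot : (N : ℂ) * ∫ z, Q i i z ∂μ = 1 := by
    rw [← totalSum μ hsphere, Finset.sum_congr rfl fun k _ => hall k]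
    simp [Finset.sum_const, Finset.card_univ, mul_comm]
  have hNne : (N : ℂ) ≠ 0 := Nat.cast_ne_zero.mpr hN.ne'
  field_simp
  linear_combination htot

include hunitary hsphere in
lemma MiiEq {i j : Fin N} (h : i ≠ j) :
    ∫ z, P i i i i z ∂μ = ∫ z, P j j j j z ∂μ := by
  have hsym : ∫ z, P j j i i z ∂μ = ∫ z, P i i j j z ∂μ :=
    integral_congr_ae (Filter.Eventually.of_forall fun z => by simp [P, Q]; ring)
  have hD := relD μ hunitary hsphere h
  have hD' := relD μ hunitary hsphere (Ne.symm h)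
  rw [hsym] at hD'
  have hE := relE μ hunitary hsphere h
  linear_combination hD - hD'

include hunitary hsphere in
lemma Mdiag (hN : 0 < N) (i : Fin N) :
    ∫ z, P i i i i z ∂μ = 2 * ((N : ℂ) * ((N : ℂ) + 1))⁻¹ := by
  have hrow : ∑ j, ∫ z, P i i j j z ∂μ = ((N : ℂ))⁻¹ := by
    rw [← rowSum μ hsphere i, m_val μ hunitary hsphere hN i]
  have hsplit : (∫ z, P i i i i z ∂μ)
      + ∑ j ∈ Finset.univ.erase i, ∫ z, P i i j j z ∂μ = ((N : ℂ))⁻¹ := by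
    rw [← hrow]
    exact Finset.add_sum_erase _ (fun j => ∫ z, P i i j j z ∂μ) (Finset.mem_univ i)
  have hoff : ∀ j ∈ Finset.univ.erase i, ∫ z, P i i j j z ∂μ
      = 2⁻¹ * ∫ z, P i i i i z ∂μ := by
    intro j hj
    have hji : i ≠ j := fun hh => (Finset.mem_erase.mp hj).1 hh.symm
    rw [relE μ hunitary hsphere hji, ← MiiEq μ hunitary hsphere hji]
    ring
  rw [Finset.sum_congr rfl hoff, Finset.sum_const, Finset.card_erase_of_mem (Finset.mem_univ i),
    Finset.card_univ, Fintype.card_fin] at hsplit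
  have hNne : (N : ℂ) ≠ 0 := Nat.cast_ne_zero.mpr hN.ne'
  have hN1ne : (N : ℂ) + 1 ≠ 0 := by
    have : ((N + 1 : ℕ) : ℂ) ≠ 0 := Nat.cast_ne_zero.mpr (Nat.succ_ne_zero N)
    push_cast at this
    exact this
  have hcard : ((N - 1 : ℕ) : ℂ) = (N : ℂ) - 1 := by
    push_cast [Nat.cast_sub hN]
    ring
  rw [nsmul_eq_mul, hcard] at hsplit
  have hne : (N : ℂ) * ((N : ℂ) + 1) ≠ 0 := mul_ne_zero hNne hN1ne
  have h2 : (N : ℂ) * ((∫ z, P i i i i z ∂μ)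
      + ((N : ℂ) - 1) * (2⁻¹ * ∫ z, P i i i i z ∂μ)) = 1 := by
    rw [hsplit, mul_inv_cancel₀ hNne]
  have h3 : (∫ z, P i i i i z ∂μ) * ((N : ℂ) * ((N : ℂ) + 1)) = 2 := by
    linear_combination 2 * h2
  calc ∫ z, P i i i i z ∂μ
      = (∫ z, P i i i i z ∂μ) * (((N : ℂ) * ((N : ℂ) + 1)) * ((N : ℂ) * ((N : ℂ) + 1))⁻¹) := by
        rw [mul_inv_cancel₀ hne, mul_one]
    _ = ((∫ z, P i i i i z ∂μ) * ((N : ℂ) * ((N : ℂ) + 1))) * ((N : ℂ) * ((N : ℂ) + 1))⁻¹ := by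
        ring
    _ = 2 * ((N : ℂ) * ((N : ℂ) + 1))⁻¹ := by rw [h3]

include hunitary hsphere in
lemma Moff (hN : 0 < N) {i j : Fin N} (h : i ≠ j) :
    ∫ z, P i i j j z ∂μ = ((N : ℂ) * ((N : ℂ) + 1))⁻¹ := by
  rw [relE μ hunitary hsphere h, Mdiag μ hunitary hsphere hN i, Mdiag μ hunitary hsphere hN j]
  ring

lemma diag_quadForm (dv : Fin N → ℂ) (z : Fin N → ℂ) :
    star z ⬝ᵥ (Matrix.diagonal dv *ᵥ z) = ∑ i, dv i * Q i i z := by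
  simp only [dotProduct, Matrix.mulVec_diagonal, Pi.star_apply, Q]
  exact Finset.sum_congr rfl fun i _ => by rw [Complex.star_def]; ring

end Measure

end SphereMomentsAux

open SphereMomentsAux in
/-- For `z` uniform on the unit sphere of `ℂ^N` and `Λ` Hermitian,
`E[(zᴴ Λ z)²] = (Tr(Λ²) + Tr(Λ)²)/(N(N+1))`. -/
theorem expectation_quadForm_sq_sphere {N : ℕ}
    (μ : Measure (Fin N → ℂ)) [IsProbabilityMeasure μ]
    (hsphere : ∀ᵐ z ∂μ, ∑ i, ‖z i‖ ^ 2 = 1)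
    (hunitary : ∀ U : Matrix.unitaryGroup (Fin N) ℂ,
      Measure.map (fun z => (U : Matrix (Fin N) (Fin N) ℂ) *ᵥ z) μ = μ)
    (Λ : Matrix (Fin N) (Fin N) ℂ) (hΛ : Λ.IsHermitian) :
    ∫ z, ((star z ⬝ᵥ (Λ *ᵥ z)).re) ^ 2 ∂μ =
      ((Λ * Λ).trace.re + (Λ.trace.re) ^ 2) / ((N : ℝ) * ((N : ℝ) + 1)) := by
  classical
  rcases Nat.eq_zero_or_pos N with h0 | hN
  · exfalso
    subst h0
    have hfalse : ∀ᵐ z ∂μ, False := hsphere.mono fun z hz => by simpa using hz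
    have hμ : μ = 0 := by
      rwa [Filter.eventually_false_iff_eq_bot, ae_eq_bot] at hfalse
    have h1 := measure_univ (μ := μ)
    rw [hμ] at h1
    simp at h1
  set U : Matrix (Fin N) (Fin N) ℂ := (hΛ.eigenvectorUnitary : Matrix (Fin N) (Fin N) ℂ)
    with hUdef
  set dv : Fin N → ℂ := fun i => ((hΛ.eigenvalues i : ℝ) : ℂ) with hdv
  have hspec : Λ = U * Matrix.diagonal dv * star U := hΛ.spectral_theorem
  have hUU : star U * U = 1 := Matrix.mem_unitaryGroup_iff'.mp hΛ.eigenvectorUnitary.2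
  have hmem : star U ∈ Matrix.unitaryGroup (Fin N) ℂ := by
    rw [hUdef, ← Unitary.coe_star]
    exact (star hΛ.eigenvectorUnitary).2
  set qD : (Fin N → ℂ) → ℂ := fun z => ∑ i, dv i * Q i i z with hqDdef
  have contqD : Continuous qD :=
    continuous_finset_sum _ fun i _ => continuous_const.mul (contQ i i)
  have hq : ∀ z, star z ⬝ᵥ (Λ *ᵥ z) = qD (star U *ᵥ z) := by
    intro z
    conv_lhs => rw [hspec]
    rw [← Matrix.mulVec_mulVec, ← Matrix.mulVec_mulVec, Matrix.dotProduct_mulVec]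
    have hvm : star z ᵥ* U = star (star U *ᵥ z) := by
      rw [Matrix.star_mulVec, Matrix.star_eq_conjTranspose, Matrix.conjTranspose_conjTranspose]
    rw [hvm, diag_quadForm]
  -- Step 1: transfer to the diagonal quadratic form
  have step1 : ∫ z, ((star z ⬝ᵥ (Λ *ᵥ z)).re) ^ 2 ∂μ = ∫ z, ((qD z).re) ^ 2 ∂μ := by
    have hpt : ∀ z, ((star z ⬝ᵥ (Λ *ᵥ z)).re) ^ 2 = ((qD (star U *ᵥ z)).re) ^ 2 := fun z => by
      rw [hq]
    rw [integral_congr_ae (Filter.Eventually.of_forall hpt)]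
    exact cov μ hunitary hmem (fun z => ((qD z).re) ^ 2)
      ((Complex.continuous_re.comp contqD).pow 2)
  -- qD is real-valued
  have hconj : ∀ z, conj (qD z) = qD z := fun z => by
    rw [hqDdef, map_sum]
    exact Finset.sum_congr rfl fun i _ => by
      simp only [Q, _root_.map_mul, Complex.conj_conj, hdv, Complex.conj_ofReal]
      ring
  have him : ∀ z, ((qD z).re) ^ 2 = (qD z * qD z).re := fun z => by
    have h0 : (qD z).im = 0 := Complex.conj_eq_iff_im.mp (hconj z)
    rw [Complex.mul_re, h0]
    ring
  -- integrability of qD * qD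
  have hGeq : (fun z => qD z * qD z) = fun z => ∑ i, ∑ j, dv i * dv j * P i i j j z := by
    funext z
    rw [hqDdef, Finset.sum_mul_sum]
    exact Finset.sum_congr rfl fun i _ => Finset.sum_congr rfl fun j _ => by
      simp only [P]; ring
  have hIntG : Integrable (fun z => qD z * qD z) μ := by
    rw [hGeq]
    exact integrable_finset_sum _ fun i _ =>
      integrable_finset_sum _ fun j _ => (intP μ hsphere i i j j).const_mul _
  have step2 : ∫ z, ((qD z).re) ^ 2 ∂μ = (∫ z, qD z * qD z ∂μ).re := by
    rw [integral_congr_ae (Filter.Eventually.of_forall him)]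
    simp_rw [← RCLike.re_eq_complex_re]
    exact integral_re hIntG
  -- Step 3: compute the complex integral
  set b : ℂ := ((N : ℂ) * ((N : ℂ) + 1))⁻¹ with hb
  have step3 : ∫ z, qD z * qD z ∂μ =
      ((∑ i, dv i * dv i) + (∑ i, dv i) * (∑ j, dv j)) * b := by
    rw [show (∫ z, qD z * qD z ∂μ) = ∫ z, ∑ i, ∑ j, dv i * dv j * P i i j j z ∂μ by rw [hGeq]]
    rw [integral_finset_sum _ (fun i _ =>
      integrable_finset_sum _ fun j _ => (intP μ hsphere i i j j).const_mul _)]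
    have hin : ∀ i : Fin N, ∫ z, ∑ j, dv i * dv j * P i i j j z ∂μ =
        ∑ j, dv i * dv j * ∫ z, P i i j j z ∂μ := by
      intro i
      rw [integral_finset_sum _ (fun j _ => (intP μ hsphere i i j j).const_mul _)]
      exact Finset.sum_congr rfl fun j _ => integral_const_mul _ _
    rw [Finset.sum_congr rfl fun i _ => hin i]
    have hper : ∀ i : Fin N, ∑ j, dv i * dv j * ∫ z, P i i j j z ∂μ =
        dv i * dv i * b + dv i * ((∑ j, dv j) * b) := by
      intro i
      rw [← Finset.add_sum_erase _ (fun j => dv i * dv j * ∫ z, P i i j j z ∂μ)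
        (Finset.mem_univ i)]
      rw [Mdiag μ hunitary hsphere hN i]
      have herase : ∑ j ∈ Finset.univ.erase i, dv i * dv j * ∫ z, P i i j j z ∂μ =
          ∑ j ∈ Finset.univ.erase i, dv i * b * dv j := by
        refine Finset.sum_congr rfl fun j hj => ?_
        have hij : i ≠ j := fun hh => (Finset.mem_erase.mp hj).1 hh.symm
        rw [Moff μ hunitary hsphere hN hij, ← hb]
        ring
      rw [herase, ← Finset.mul_sum, Finset.sum_erase_eq_sub (Finset.mem_univ i), ← hb]
      ring
    rw [Finset.sum_congr rfl fun i _ => hper i, Finset.sum_add_distrib, ← Finset.sum_mul,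
      ← Finset.sum_mul]
    ring
  -- traces
  have hTr1 : Λ.trace = ∑ i, dv i := by
    conv_lhs => rw [hspec]
    rw [Matrix.trace_mul_cycle, hUU, Matrix.one_mul, Matrix.trace_diagonal]
  have hTr2 : (Λ * Λ).trace = ∑ i, dv i * dv i := by
    have hmul : Λ * Λ = U * (Matrix.diagonal dv * Matrix.diagonal dv) * star U := by
      conv_lhs => rw [hspec]
      rw [Matrix.mul_assoc (U * Matrix.diagonal dv) (star U) _,
        ← Matrix.mul_assoc (star U) (U * Matrix.diagonal dv) (star U),
        ← Matrix.mul_assoc (star U) U (Matrix.diagonal dv), hUU, Matrix.one_mul,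
        ← Matrix.mul_assoc (U * Matrix.diagonal dv) (Matrix.diagonal dv) (star U),
        Matrix.mul_assoc U (Matrix.diagonal dv) (Matrix.diagonal dv)]
    rw [hmul, Matrix.trace_mul_cycle, hUU, Matrix.one_mul, Matrix.diagonal_mul_diagonal,
      Matrix.trace_diagonal]
    try exact Finset.sum_congr rfl fun i _ => rfl
  -- final computation
  rw [step1, step2, step3, hTr1, hTr2]
  have ha1 : (∑ i, dv i) = ((∑ i, hΛ.eigenvalues i : ℝ) : ℂ) := by
    rw [hdv]; push_cast; rfl
  have ha2 : (∑ i, dv i * dv i) = ((∑ i, hΛ.eigenvalues i * hΛ.eigenvalues i : ℝ) : ℂ) := by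
    rw [hdv]; push_cast; rfl
  rw [ha1, ha2, hb, Complex.ofReal_re, Complex.ofReal_re]
  have hcast : ((((∑ i, hΛ.eigenvalues i * hΛ.eigenvalues i : ℝ) : ℂ)
        + ((∑ i, hΛ.eigenvalues i : ℝ) : ℂ) * ((∑ i, hΛ.eigenvalues i : ℝ) : ℂ))
        * ((N : ℂ) * ((N : ℂ) + 1))⁻¹ : ℂ)
      = ((((∑ i, hΛ.eigenvalues i * hΛ.eigenvalues i) + (∑ i, hΛ.eigenvalues i)
          * (∑ i, hΛ.eigenvalues i)) * (((N : ℝ)) * ((N : ℝ) + 1))⁻¹ : ℝ) : ℂ) := by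
    push_cast
    ring
  rw [hcast, Complex.ofReal_re]
  try ring
end
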